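/- Let a > 0, let f : [0,a] → ℝ be a 1-Lipschitz function and let (a_n) be a good partition of [0,a]. Suppose that τ > 0, K > 1 is an integer, (1+τ)^K < 2, and a_{n−K}/a_n ≥ 2 for every n ≥ K. Then T_τ(f) < T(f,(a_n)) + 6K(K−1)τa. -/

import Mathlib

open Set Finset

/-- A good partition of `[0,a]`: a strictly decreasing sequence `a = a₀ > a₁ > … > 0`
tending to `0` with `a_{n-1}/a_n ≤ 2`. -/
def IsGoodPartition (a : ℝ) (u : ℕ → ℝ) : Prop :=
  u 0 = a ∧ (∀ n, 0 < u n) ∧ (∀ n, u (n + 1) < u n) ∧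
    Filter.Tendsto u Filter.atTop (nhds 0) ∧ ∀ n, u n ≤ 2 * u (n + 1)

/-- A `τ`-good partition: a good partition with `a_{n-1}/a_n ≥ 1 + τ`. -/
def IsTauGoodPartition (τ a : ℝ) (u : ℕ → ℝ) : Prop :=
  IsGoodPartition a u ∧ ∀ n, (1 + τ) * u (n + 1) ≤ u n

/-- The total drop of `f` according to the partition `(a_n)`:
`T(f,(a_n)) = Σ_{n≥1} (f(a_n) − min_{[a_n, a_{n-1}]} f)`. -/
noncomputable def totalDrop (f : ℝ → ℝ) (u : ℕ → ℝ) : ℝ :=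
  ∑' n : ℕ, (f (u (n + 1)) - sInf (f '' Set.Icc (u (n + 1)) (u n)))

/-- `T(f)`: the infimum of the total drop over all good partitions of `[0,a]`. -/
noncomputable def drop (a : ℝ) (f : ℝ → ℝ) : ℝ :=
  sInf {t | ∃ u, IsGoodPartition a u ∧ t = totalDrop f u}

/-- `T_τ(f)`: the infimum of the total drop over all `τ`-good partitions of `[0,a]`. -/
noncomputable def dropTau (τ a : ℝ) (f : ℝ → ℝ) : ℝ :=
  sInf {t | ∃ u, IsTauGoodPartition τ a u ∧ t = totalDrop f u}


-- partial sums bound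
lemma aux_sum (K : ℕ) (hK : 0 < K) :
    ∀ (n : ℕ) (w : ℕ → ℝ), (∀ i, 0 < w i) → (∀ i, w (i+1) ≤ w i) →
      (∀ i, 2 * w (i + K) ≤ w i) →
      ∑ i ∈ Finset.range n, w i ≤ 2 * K * w 0 := by
  intro n
  induction n using Nat.strong_induction_on with
  | _ n IH =>
    intro w hpos hanti hblk
    have hwA : ∀ i, w i ≤ w 0 := by
      intro i
      induction i with
      | zero => exact le_rfl
      | succ k ih => exact (hanti k).trans ih
    have hA0 : 0 < w 0 := hpos 0
    have hKR : (1:ℝ) ≤ K := by exact_mod_cast hK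
    by_cases hn : n ≤ K
    · calc ∑ i ∈ Finset.range n, w i ≤ ∑ i ∈ Finset.range n, w 0 :=
            Finset.sum_le_sum (fun i _ => hwA i)
        _ = n * w 0 := by simp [mul_comm]
        _ ≤ 2 * K * w 0 := by
            have hnK : (n:ℝ) ≤ K := by exact_mod_cast hn
            nlinarith
    · push_neg at hn
      obtain ⟨m, rfl⟩ : ∃ m, n = K + m := ⟨n - K, by omega⟩
      rw [Finset.sum_range_add]
      have h1 : ∑ i ∈ Finset.range K, w i ≤ K * w 0 :=
        (Finset.sum_le_sum (fun i _ => hwA i)).trans (by simp [mul_comm])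
      have h2 : ∑ i ∈ Finset.range m, w (K + i) ≤ 2 * K * w (K + 0) := by
        apply IH m (by omega) (fun i => w (K + i)) (fun i => hpos _)
          (fun i => by have h := hanti (K + i); rwa [Nat.add_assoc] at h)
          (fun i => by simpa [Nat.add_assoc] using hblk (K + i))
      have h3 : 2 * w K ≤ w 0 := by simpa using hblk 0
      have := hwA K
      simp only [Nat.add_zero] at h2
      nlinarith

lemma aux_min (f : ℝ → ℝ) (a : ℝ) (hf : LipschitzOnWith 1 f (Icc 0 a))
    (b c : ℝ) (hb : 0 ≤ b) (hbc : b ≤ c) (hca : c ≤ a) :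
    ∃ x ∈ Icc b c, f x = sInf (f '' Icc b c) ∧ ∀ y ∈ Icc b c, f x ≤ f y := by
  have hsub : Icc b c ⊆ Icc 0 a := Icc_subset_Icc hb hca
  have hcont : ContinuousOn f (Icc b c) := (hf.continuousOn).mono hsub
  obtain ⟨x, hx, hmin⟩ := (isCompact_Icc (a := b) (b := c)).exists_isMinOn
    (nonempty_Icc.mpr hbc) hcont
  have hlb : ∀ z ∈ f '' Icc b c, f x ≤ z := by
    rintro z ⟨y, hy, rfl⟩; exact hmin hy
  refine ⟨x, hx, ?_, fun y hy => hmin hy⟩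
  exact le_antisymm (le_csInf ⟨f x, x, hx, rfl⟩ hlb) (csInf_le ⟨f x, hlb⟩ ⟨x, hx, rfl⟩)

-- distance bound from Lipschitz
lemma aux_lip (f : ℝ → ℝ) (a : ℝ) (hf : LipschitzOnWith 1 f (Icc 0 a))
    {x y : ℝ} (hx : x ∈ Icc 0 a) (hy : y ∈ Icc 0 a) : f x - f y ≤ |x - y| := by
  have := hf.dist_le_mul x hx y hy
  rw [Real.dist_eq, Real.dist_eq] at this
  simpa using (le_trans (le_abs_self _) this)

lemma aux_bdd (f : ℝ → ℝ) (a : ℝ) (hf : LipschitzOnWith 1 f (Icc 0 a))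
    (b c : ℝ) (hb : 0 ≤ b) (hbc : b ≤ c) (hca : c ≤ a) :
    BddBelow (f '' Icc b c) := by
  obtain ⟨x, hx, hfx, hmin⟩ := aux_min f a hf b c hb hbc hca
  exact ⟨f x, by rintro z ⟨y, hy, rfl⟩; exact hmin y hy⟩

lemma aux_term_nonneg (f : ℝ → ℝ) (a : ℝ) (hf : LipschitzOnWith 1 f (Icc 0 a))
    (b c : ℝ) (hb : 0 ≤ b) (hbc : b ≤ c) (hca : c ≤ a) :
    0 ≤ f b - sInf (f '' Icc b c) := by
  have := csInf_le (aux_bdd f a hf b c hb hbc hca) ⟨b, ⟨le_rfl, hbc⟩, rfl⟩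
  linarith

lemma aux_term_mono (f : ℝ → ℝ) (a : ℝ) (hf : LipschitzOnWith 1 f (Icc 0 a))
    (b c c' : ℝ) (hb : 0 ≤ b) (hbc : b ≤ c) (hcc : c ≤ c') (hca : c' ≤ a) :
    sInf (f '' Icc b c') ≤ sInf (f '' Icc b c) :=
  csInf_le_csInf (aux_bdd f a hf b c' hb (hbc.trans hcc) hca)
    ⟨f b, b, ⟨le_rfl, hbc⟩, rfl⟩
    (image_mono (Icc_subset_Icc le_rfl hcc))

lemma aux_term_split (f : ℝ → ℝ) (a : ℝ) (hf : LipschitzOnWith 1 f (Icc 0 a))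
    (b b' c : ℝ) (hb : 0 ≤ b) (hbb : b ≤ b') (hbc : b' ≤ c) (hca : c ≤ a) :
    f b - sInf (f '' Icc b c) ≤ (b' - b) + (f b' - sInf (f '' Icc b' c)) := by
  obtain ⟨x, hx, hfx, hmin⟩ := aux_min f a hf b c hb (hbb.trans hbc) hca
  have hxa : x ∈ Icc 0 a := ⟨hb.trans hx.1, hx.2.trans hca⟩
  have hba : b ∈ Icc 0 a := ⟨hb, (hbb.trans hbc).trans hca⟩
  have hb'a : b' ∈ Icc 0 a := ⟨hb.trans hbb, hbc.trans hca⟩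
  rcases le_or_gt x b' with hxb | hxb
  · have h1 : f b - f x ≤ b' - b := by
      have := aux_lip f a hf hba hxa
      rw [abs_sub_comm, abs_of_nonneg (by linarith [hx.1])] at this
      linarith [hx.1]
    have h2 := aux_term_nonneg f a hf b' c (hb.trans hbb) hbc hca
    linarith [hfx ▸ h1]
  · have h1 : f b - f b' ≤ b' - b := by
      have := aux_lip f a hf hba hb'a
      rw [abs_sub_comm, abs_of_nonneg (by linarith)] at this
      linarith
    have h2 : sInf (f '' Icc b' c) ≤ f x :=
      csInf_le (aux_bdd f a hf b' c (hb.trans hbb) hbc hca) ⟨x, ⟨hxb.le, hx.2⟩, rfl⟩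
    linarith [hfx ▸ h2]

lemma aux_pow (τ : ℝ) (hτ : 0 < τ) :
    ∀ m : ℕ, (1 + τ) ^ m ≤ 2 → (1 + τ) ^ m - 1 ≤ 2 * m * τ := by
  intro m
  induction m with
  | zero => simp
  | succ k ih =>
    intro h
    have h1 : (1:ℝ) ≤ 1 + τ := by linarith
    have hk : (1 + τ) ^ k ≤ 2 :=
      le_trans (pow_le_pow_right₀ h1 (Nat.le_succ k)) h
    have := ih hk
    have hpos : (0:ℝ) < (1+τ)^k := by positivity
    rw [pow_succ]
    push_cast
    nlinarith

noncomputable def vSeq (τ a : ℝ) (u : ℕ → ℝ) : ℕ → ℝ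
  | 0 => a
  | n+1 => min (u (n+1)) (vSeq τ a u n / (1+τ))

lemma aux_block (a τ : ℝ) (K : ℕ) (u : ℕ → ℝ) (hτ : 0 < τ)
    (hτK : (1 + τ) ^ K ≤ 2) (hK : 1 ≤ K) (hupos : ∀ n, 0 < u n)
    (hanti : ∀ n m, n ≤ m → u m ≤ u n) (h2 : ∀ n, 2 * u (n + K) ≤ u n) :
    ∀ m n, m ≤ n → (1 + τ) ^ (n - m) * u n ≤ (1 + τ) ^ (K - 1) * u m := by
  have hq : ∀ (q m : ℕ), 2 ^ q * u (m + q * K) ≤ u m := by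
    intro q
    induction q with
    | zero => intro m; simp
    | succ p ih =>
      intro m
      have h1 : 2 * u (m + p * K + K) ≤ u (m + p * K) := h2 _
      have e : m + (p + 1) * K = m + p * K + K := by ring
      rw [e, pow_succ]
      have hp2 : (0:ℝ) < 2 ^ p := by positivity
      nlinarith [ih m, hupos (m + p * K + K), hupos (m + p * K)]
  intro m n hmn
  set d := n - m with hd
  set q := d / K with hq'
  set r := d % K with hr'
  have hdqr : d = q * K + r := by
    rw [hq', hr', mul_comm]; exact (Nat.div_add_mod d K).symm
  have h1τ : (1:ℝ) ≤ 1 + τ := by linarith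
  have hrK : r ≤ K - 1 := by
    have : r < K := Nat.mod_lt _ (by omega)
    omega
  have e1 : (1 + τ) ^ d ≤ 2 ^ q * (1 + τ) ^ (K - 1) := by
    rw [hdqr, pow_add, mul_comm q K, pow_mul]
    exact mul_le_mul (pow_le_pow_left₀ (by positivity) hτK q)
      (pow_le_pow_right₀ h1τ hrK) (by positivity) (by positivity)
  have e2 : u n ≤ u (m + q * K) := hanti _ _ (by omega)
  have e3 := hq q m
  have hP : (0:ℝ) < (1 + τ) ^ (K - 1) := by positivity
  have h2q : (0:ℝ) < 2 ^ q := by positivity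
  calc (1 + τ) ^ d * u n ≤ (2 ^ q * (1 + τ) ^ (K - 1)) * u n :=
        mul_le_mul_of_nonneg_right e1 (hupos n).le
    _ = (1 + τ) ^ (K - 1) * (2 ^ q * u n) := by ring
    _ ≤ (1 + τ) ^ (K - 1) * (2 ^ q * u (m + q * K)) := by
        apply mul_le_mul_of_nonneg_left _ hP.le
        exact mul_le_mul_of_nonneg_left e2 h2q.le
    _ ≤ (1 + τ) ^ (K - 1) * u m := mul_le_mul_of_nonneg_left e3 hP.le

lemma aux_term_ub (f : ℝ → ℝ) (a : ℝ) (hf : LipschitzOnWith 1 f (Icc 0 a))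
    (b c : ℝ) (hb : 0 ≤ b) (hbc : b ≤ c) (hca : c ≤ a) :
    f b - sInf (f '' Icc b c) ≤ c - b := by
  obtain ⟨x, hx, hfx, hmin⟩ := aux_min f a hf b c hb hbc hca
  have := aux_lip f a hf (x := b) (y := x) ⟨hb, hbc.trans hca⟩
    ⟨hb.trans hx.1, hx.2.trans hca⟩
  rw [abs_sub_comm, abs_of_nonneg (by linarith [hx.1])] at this
  rw [← hfx]
  linarith [hx.2]

/-- **Lemma.** Let `f : [0,a] → ℝ` be `1`-Lipschitz and `(a_n)` a good partition of `[0,a]`.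
If `τ > 0`, `K > 1` is an integer with `(1+τ)^K < 2` and `a_{n-K}/a_n ≥ 2` for all `n ≥ K`,
then `T_τ(f) < T(f,(a_n)) + 6K(K−1)τa`. -/
theorem statement15 (a τ : ℝ) (ha : 0 < a) (hτ : 0 < τ) (K : ℕ) (hK : 1 < K)
    (hτK : (1 + τ) ^ K < 2) (f : ℝ → ℝ) (hf : LipschitzOnWith 1 f (Set.Icc 0 a))
    (u : ℕ → ℝ) (hu : IsGoodPartition a u) (h2 : ∀ n, 2 * u (n + K) ≤ u n) :
    dropTau τ a f < totalDrop f u + 6 * (K : ℝ) * ((K : ℝ) - 1) * τ * a := by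
  obtain ⟨hu0, hupos, hudec, hulim, hudbl⟩ := hu
  have hτ1 : (1:ℝ) ≤ 1 + τ := by linarith
  have hτ0 : (0:ℝ) < 1 + τ := by linarith
  have huanti : ∀ n m : ℕ, n ≤ m → u m ≤ u n := fun n m h =>
    ((strictAnti_nat_of_succ_lt hudec).antitone h)
  have hua : ∀ n, u n ≤ a := fun n => hu0 ▸ huanti 0 n (Nat.zero_le n)
  have hτlt1 : τ < 1 := by
    have h2K : (1+τ)^2 ≤ (1+τ)^K := pow_le_pow_right₀ hτ1 (by omega : 2 ≤ K)
    nlinarith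
  set v := vSeq τ a u with hv
  -- basic properties of v
  have hv0 : v 0 = a := rfl
  have hvle : ∀ n, v n ≤ u n := by
    intro n
    cases n with
    | zero => rw [hu0]; exact hv0.le
    | succ k => exact min_le_left _ _
  have hvpos : ∀ n, 0 < v n := by
    intro n
    induction n with
    | zero => exact ha
    | succ k ih => exact lt_min (hupos _) (div_pos ih hτ0)
  have hvτ : ∀ n, (1 + τ) * v (n + 1) ≤ v n := by
    intro n
    have h := min_le_right (u (n+1)) (v n / (1+τ))
    calc (1 + τ) * v (n+1) ≤ (1 + τ) * (v n / (1+τ)) :=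
          mul_le_mul_of_nonneg_left h hτ0.le
      _ = v n := by field_simp
  have hvdec : ∀ n, v (n + 1) < v n := by
    intro n
    have := hvτ n
    nlinarith [hvpos (n+1)]
  have hvdbl : ∀ n, v n ≤ 2 * v (n + 1) := by
    intro n
    rcases le_total (u (n+1)) (v n / (1+τ)) with h | h
    · have he : v (n+1) = u (n+1) := min_eq_left h
      rw [he]
      exact (hvle n).trans (hudbl n)
    · have he : v (n+1) = v n / (1+τ) := min_eq_right h
      rw [he, show 2 * (v n / (1 + τ)) = 2 * v n / (1 + τ) from
        (mul_div_assoc _ _ _).symm, le_div_iff₀ hτ0]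
      nlinarith [hvpos n]
  have hvlim : Filter.Tendsto v Filter.atTop (nhds 0) :=
    squeeze_zero (fun n => (hvpos n).le) hvle hulim
  -- representation and lower bound for v
  have hvrep : ∀ n, ∃ m, m ≤ n ∧ v n = u m / (1 + τ) ^ (n - m) := by
    intro n
    induction n with
    | zero => exact ⟨0, le_rfl, by simp [hv0, hu0]⟩
    | succ k ih =>
      rcases le_total (u (k+1)) (v k / (1+τ)) with h | h
      · exact ⟨k+1, le_rfl, by rw [show v (k+1) = u (k+1) from min_eq_left h]; simp⟩
      · obtain ⟨m, hm, he⟩ := ih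
        refine ⟨m, hm.trans (Nat.le_succ k), ?_⟩
        rw [show v (k+1) = v k / (1+τ) from min_eq_right h, he,
          show k + 1 - m = (k - m) + 1 by omega, pow_succ, div_div]
  have hlow : ∀ n, u n / (1 + τ) ^ (K - 1) ≤ v n := by
    intro n
    obtain ⟨m, hm, he⟩ := hvrep n
    rw [he, div_le_div_iff₀ (by positivity) (by positivity)]
    calc u n * (1 + τ) ^ (n - m) = (1 + τ) ^ (n - m) * u n := mul_comm _ _
      _ ≤ (1 + τ) ^ (K - 1) * u m :=
          aux_block a τ K u hτ hτK.le hK.le hupos huanti h2 m n hm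
      _ = u m * (1 + τ) ^ (K - 1) := mul_comm _ _
  -- the perturbation bound
  have hPle2 : (1 + τ) ^ (K - 1) ≤ 2 :=
    (pow_le_pow_right₀ hτ1 (Nat.sub_le K 1)).trans hτK.le
  have hP1 : (1:ℝ) ≤ (1 + τ) ^ (K - 1) := one_le_pow₀ hτ1
  have hpow : (1 + τ) ^ (K - 1) - 1 ≤ 2 * (K - 1 : ℕ) * τ := aux_pow τ hτ _ hPle2
  have hKcast : ((K - 1 : ℕ) : ℝ) = (K : ℝ) - 1 := by
    have : (1:ℕ) ≤ K := hK.le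
    push_cast [Nat.cast_sub this]
    ring
  have hpert : ∀ n, u n - v n ≤ 2 * ((K:ℝ) - 1) * τ * u n := by
    intro n
    have h1 : u n ≤ (1 + τ) ^ (K - 1) * v n := by
      rw [← div_le_iff₀' (by positivity)] -- maybe wrong direction
      exact hlow n
    have h2' := hvle n
    have h3 := hvpos n
    have h4 := hupos n
    rw [← hKcast]
    nlinarith [mul_le_mul_of_nonneg_left h2' (sub_nonneg.mpr hP1)]
  -- summability
  have husum : Summable u := by
    apply summable_of_sum_range_le (fun n => (hupos n).le)
    intro n
    exact aux_sum K (by omega) n u hupos (fun i => (hudec i).le) h2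
  have hSu1 : Summable (fun j => u (j + 1)) := (summable_nat_add_iff 1).mpr husum
  have hsum1 : ∑' j, u (j + 1) ≤ 2 * K * a := by
    have hKa : 2 * (K:ℝ) * u 1 ≤ 2 * K * a := by
      have h0K : (0:ℝ) ≤ 2 * K := by positivity
      nlinarith [hua 1]
    apply Summable.tsum_le_of_sum_range_le hSu1
    intro n
    refine le_trans (aux_sum K (by omega) n (fun i => u (i + 1)) (fun i => hupos _)
      (fun i => (hudec (i+1)).le) (fun i => ?_)) hKa
    have h := h2 (i + 1)
    rwa [show i + 1 + K = i + K + 1 from by omega] at h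
  -- drop terms
  set Tu : ℕ → ℝ := fun j => f (u (j + 1)) - sInf (f '' Icc (u (j + 1)) (u j)) with hTu
  set Tv : ℕ → ℝ := fun j => f (v (j + 1)) - sInf (f '' Icc (v (j + 1)) (v j)) with hTv
  have htdu : totalDrop f u = ∑' j, Tu j := rfl
  have htdv : totalDrop f v = ∑' j, Tv j := rfl
  have hTu0 : ∀ j, 0 ≤ Tu j := fun j =>
    aux_term_nonneg f a hf _ _ (hupos _).le (hudec j).le (hua j)
  have hSTu : Summable Tu := by
    apply Summable.of_nonneg_of_le hTu0 (fun j => ?_) husum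
    have := aux_term_ub f a hf (u (j+1)) (u j) (hupos _).le (hudec j).le (hua j)
    have := hupos (j + 1)
    try simp only [hTu]
    linarith
  have hva : ∀ n, v n ≤ a := fun n => (hvle n).trans (hua n)
  have hSTv : Summable Tv := by
    apply Summable.of_nonneg_of_le
      (fun j => aux_term_nonneg f a hf _ _ (hvpos _).le (hvdec j).le (hva j))
      (fun j => ?_) husum
    have := aux_term_ub f a hf (v (j+1)) (v j) (hvpos _).le (hvdec j).le (hva j)
    have := hvpos (j + 1)
    have := hvle j
    try simp only [hTv]
    linarith
  -- key comparison
  have hkey : ∀ j, Tv j ≤ Tu j + 2 * ((K:ℝ) - 1) * τ * u (j + 1) := by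
    intro j
    have s1 : sInf (f '' Icc (v (j+1)) (u j)) ≤ sInf (f '' Icc (v (j+1)) (v j)) :=
      aux_term_mono f a hf (v (j+1)) (v j) (u j) (hvpos _).le (hvdec j).le
        (hvle j) (hua j)
    have s2 := aux_term_split f a hf (v (j+1)) (u (j+1)) (u j) (hvpos _).le
      (hvle (j+1)) (hudec j).le (hua j)
    have s3 := hpert (j + 1)
    try simp only [hTu, hTv]
    linarith
  -- summing up
  have hSrhs : Summable (fun j => Tu j + 2 * ((K:ℝ) - 1) * τ * u (j + 1)) :=
    hSTu.add (hSu1.mul_left _)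
  have hc0 : (0:ℝ) ≤ 2 * ((K:ℝ) - 1) * τ := by
    have : (2:ℝ) ≤ K := by exact_mod_cast hK
    nlinarith
  have hmain : totalDrop f v ≤ totalDrop f u + 2 * ((K:ℝ) - 1) * τ * (2 * K * a) := by
    rw [htdu, htdv]
    have h1 := Summable.tsum_le_tsum hkey hSTv hSrhs
    rw [Summable.tsum_add hSTu (hSu1.mul_left _), tsum_mul_left] at h1
    have h3 : 2 * ((K:ℝ) - 1) * τ * (∑' j, u (j + 1)) ≤ 2 * ((K:ℝ) - 1) * τ * (2 * K * a) :=
      mul_le_mul_of_nonneg_left hsum1 hc0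
    linarith
  -- dropTau ≤ totalDrop f v
  have hmem : totalDrop f v ∈ {t | ∃ w, IsTauGoodPartition τ a w ∧ t = totalDrop f w} :=
    ⟨v, ⟨⟨hv0, hvpos, hvdec, hvlim, hvdbl⟩, hvτ⟩, rfl⟩
  have hbdd : BddBelow {t | ∃ w, IsTauGoodPartition τ a w ∧ t = totalDrop f w} := by
    refine ⟨0, ?_⟩
    rintro t ⟨w, ⟨⟨hw0, hwpos, hwdec, hwlim, hwdbl⟩, hwτ⟩, rfl⟩
    have hwa : ∀ n, w n ≤ a := fun n =>
      hw0 ▸ (strictAnti_nat_of_succ_lt hwdec).antitone (Nat.zero_le n)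
    exact tsum_nonneg (fun j =>
      aux_term_nonneg f a hf _ _ (hwpos _).le (hwdec j).le (hwa j))
  have hfin : dropTau τ a f ≤ totalDrop f v := csInf_le hbdd hmem
  have hKR : (2:ℝ) ≤ (K:ℝ) := by exact_mod_cast hK
  have hque : 2 * ((K:ℝ) - 1) * τ * (2 * K * a) < 6 * (K:ℝ) * ((K:ℝ) - 1) * τ * a := by
    nlinarith [mul_pos (mul_pos (mul_pos (show (0:ℝ) < (K:ℝ) - 1 by linarith)
      (show (0:ℝ) < (K:ℝ) by linarith)) hτ) ha]
  linarith
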